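/- arXiv:2107.02204 — 2 statements merged into one kernel-verified Lean document; each statement's English description precedes it below -/
import Mathlib

section
/- Let I ⊂ K[x_0, ..., x_n] be a saturated strongly stable monomial ideal with expandable minimal generator g, and let I' be the expansion of I at g, i.e., the monomial ideal with generating set (G(I) \ {g}) ∪ {g x_j : max(g) ≤ j ≤ n-1}. Then the Hilbert polynomial of S/I' equals 1 + (Hilbert polynomial of S/I). -/
open MvPolynomial

/-- A matrix is upper triangular if entries below the diagonal vanish. -/
def UpperTriangular {K : Type} [Field K] {m : ℕ} (γ : Matrix (Fin m) (Fin m) K) : Prop :=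
  ∀ i j : Fin m, j < i → γ i j = 0

/-- The linear action of a matrix `γ` on the polynomial ring, `γ · x_j = Σ_i γ_{ij} x_i`. -/
noncomputable def borelAct {K : Type} [Field K] {m : ℕ} (γ : Matrix (Fin m) (Fin m) K) :
    MvPolynomial (Fin m) K →+* MvPolynomial (Fin m) K :=
  (aeval (fun j => ∑ i, C (γ i j) * X i)).toRingHom

/-- An ideal is Borel-fixed if it is fixed by every invertible upper-triangular matrix
acting linearly on the variables. -/
def BorelFixed {K : Type} [Field K] {m : ℕ} (I : Ideal (MvPolynomial (Fin m) K)) : Prop :=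
  ∀ γ : Matrix (Fin m) (Fin m) K, UpperTriangular γ → IsUnit γ.det →
    Ideal.map (borelAct γ) I = I

/-- A monomial ideal: with every polynomial it contains all of its monomials. -/
def IsMonomialIdeal {K : Type} [Field K] {m : ℕ} (I : Ideal (MvPolynomial (Fin m) K)) : Prop :=
  ∀ f ∈ I, ∀ u ∈ f.support, (monomial u 1 : MvPolynomial (Fin m) K) ∈ I

/-- The strong stability exchange condition: `m ∈ I`, `x_j ∣ m`, `i < j` imply `x_i m / x_j ∈ I`. -/
def StronglyStable {K : Type} [Field K] {m : ℕ} (I : Ideal (MvPolynomial (Fin m) K)) : Prop :=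
  ∀ u : Fin m →₀ ℕ, (monomial u 1 : MvPolynomial (Fin m) K) ∈ I →
    ∀ i j : Fin m, i < j → u j ≠ 0 →
      (monomial (u + Finsupp.single i 1 - Finsupp.single j 1) 1 : MvPolynomial (Fin m) K) ∈ I

/-- The saturation `(I : J^∞) = ⋃_k (I : J^k)`. -/
noncomputable def idealSat {R : Type} [CommRing R] (I J : Ideal R) : Ideal R :=
  ⨆ k : ℕ, Submodule.colon I ((J ^ k : Ideal R) : Set R)

/-- The irrelevant maximal ideal `⟨x_0, …, x_m⟩`. -/
noncomputable def irrelevant (m : ℕ) (K : Type) [Field K] : Ideal (MvPolynomial (Fin m) K) :=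
  Ideal.span (Set.range X)

/-- The Hilbert function of `S/I`: the dimension of the image of the degree-`i`
homogeneous component in `S/I`. -/
noncomputable def hfn {K : Type} [Field K] {m : ℕ} (I : Ideal (MvPolynomial (Fin m) K))
    (i : ℕ) : ℕ :=
  Module.finrank K
    ((homogeneousSubmodule (Fin m) K i).map (Ideal.Quotient.mkₐ K I).toLinearMap)

/-- The set of (exponents of) minimal monomial generators of a monomial ideal. -/
def minGens {K : Type} [Field K] {m : ℕ} (I : Ideal (MvPolynomial (Fin m) K)) :
    Set (Fin m →₀ ℕ) :=
  {u | (monomial u 1 : MvPolynomial (Fin m) K) ∈ I ∧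
    ∀ v : Fin m →₀ ℕ, v ≤ u → v ≠ u → (monomial v 1 : MvPolynomial (Fin m) K) ∉ I}

section ExpansionAux

open Finsupp

variable {K : Type} [Field K] {m : ℕ}

lemma degree_eq_sum_univ (u : Fin m →₀ ℕ) : u.degree = ∑ i, u i := by
  rw [Finsupp.degree]
  exact Finset.sum_subset (Finset.subset_univ _)
    (fun i _ h => Finsupp.notMem_support_iff.mp h)

lemma degree_lt_of_lt {u v : Fin m →₀ ℕ} (h : v ≤ u) (hne : v ≠ u) :
    v.degree < u.degree := by
  rw [degree_eq_sum_univ, degree_eq_sum_univ]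
  have hle : ∀ i, v i ≤ u i := fun i => h i
  obtain ⟨j, hj⟩ : ∃ j, v j ≠ u j := by
    by_contra hc
    push_neg at hc
    exact hne (Finsupp.ext hc)
  exact Finset.sum_lt_sum (fun i _ => hle i)
    ⟨j, Finset.mem_univ j, lt_of_le_of_ne (hle j) hj⟩

lemma degree_le_of_le {u v : Fin m →₀ ℕ} (h : v ≤ u) : v.degree ≤ u.degree := by
  rcases eq_or_ne v u with rfl | hne
  · exact le_refl _
  · exact (degree_lt_of_lt h hne).le

lemma exists_minGens_le (I : Ideal (MvPolynomial (Fin m) K)) :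
    ∀ (N : ℕ) (w : Fin m →₀ ℕ), Finsupp.degree w ≤ N →
      (monomial w 1 : MvPolynomial (Fin m) K) ∈ I → ∃ u ∈ minGens I, u ≤ w := by
  intro N
  induction N with
  | zero =>
    intro w hw hwI
    refine ⟨w, ⟨hwI, fun v hv hne hvI => ?_⟩, le_refl w⟩
    exact absurd (degree_lt_of_lt hv hne) (by omega)
  | succ N ih =>
    intro w hw hwI
    by_cases h : ∃ v, v ≤ w ∧ v ≠ w ∧ (monomial v 1 : MvPolynomial (Fin m) K) ∈ I
    · obtain ⟨v, hv, hne, hvI⟩ := h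
      have : v.degree < w.degree := degree_lt_of_lt hv hne
      obtain ⟨u, hu, huv⟩ := ih v (by omega) hvI
      exact ⟨u, hu, huv.trans hv⟩
    · push_neg at h
      exact ⟨w, ⟨hwI, fun v hv hne => h v hv hne⟩, le_refl w⟩

end ExpansionAux
section ExpansionAux1b

variable {m : ℕ}

lemma degree_add' (u v : Fin m →₀ ℕ) : (u + v).degree = u.degree + v.degree := by
  simp only [degree_eq_sum_univ, Finsupp.add_apply]
  rw [Finset.sum_add_distrib]

lemma degree_single' (a : Fin m) (k : ℕ) : (Finsupp.single a k).degree = k := by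
  rw [degree_eq_sum_univ]
  simp [Finsupp.single_apply]

end ExpansionAux1b
section ExpansionAux2

open Finsupp

variable {K : Type} [Field K] {n : ℕ}

lemma sat_step {I : Ideal (MvPolynomial (Fin (n + 1)) K)} (hss : StronglyStable I)
    (hsat : idealSat I (irrelevant (n + 1) K) = I) {w : Fin (n + 1) →₀ ℕ}
    (h : (monomial (w + Finsupp.single (Fin.last n) 1) 1 : MvPolynomial (Fin (n + 1)) K) ∈ I) :
    (monomial w 1 : MvPolynomial (Fin (n + 1)) K) ∈ I := by
  have hall : ∀ i : Fin (n + 1),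
      (monomial (w + Finsupp.single i 1) 1 : MvPolynomial (Fin (n + 1)) K) ∈ I := by
    intro i
    rcases eq_or_lt_of_le (Fin.le_last i) with he | hlt
    · rw [he]; exact h
    · have h2 := hss _ h i (Fin.last n) hlt (by simp)
      have he : w + Finsupp.single (Fin.last n) 1 + Finsupp.single i 1
          - Finsupp.single (Fin.last n) 1 = w + Finsupp.single i 1 := by
        ext a
        simp only [Finsupp.tsub_apply, Finsupp.add_apply, Finsupp.single_apply]
        split_ifs <;> omega
      rwa [he] at h2
  have hcol : (monomial w 1 : MvPolynomial (Fin (n + 1)) K) ∈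
      Submodule.colon I (((irrelevant (n + 1) K) ^ 1 : Ideal (MvPolynomial (Fin (n + 1)) K)) : Set (MvPolynomial (Fin (n + 1)) K)) := by
    rw [pow_one, Submodule.mem_colon]
    intro p hp
    have : ∀ p ∈ irrelevant (n + 1) K,
        (monomial w 1 : MvPolynomial (Fin (n + 1)) K) * p ∈ I := by
      intro q hq
      refine Submodule.span_induction (p := fun q _ => (monomial w 1 : MvPolynomial (Fin (n + 1)) K) * q ∈ I) ?_ ?_ ?_ ?_ hq
      · rintro x ⟨i, rfl⟩
        have hx : (X i : MvPolynomial (Fin (n + 1)) K) = monomial (Finsupp.single i 1) 1 := by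
          rfl
        rw [hx, monomial_mul, mul_one]
        exact hall i
      · simp
      · intro a b _ _ ha hb
        rw [mul_add]; exact Ideal.add_mem I ha hb
      · intro r x _ hx
        rw [smul_eq_mul, mul_left_comm]
        exact Ideal.mul_mem_left I r hx
    exact this p hp
  have hmem : (monomial w 1 : MvPolynomial (Fin (n + 1)) K) ∈
      idealSat I (irrelevant (n + 1) K) :=
    (le_iSup (fun k => Submodule.colon I (((irrelevant (n + 1) K) ^ k : Ideal (MvPolynomial (Fin (n + 1)) K)) : Set (MvPolynomial (Fin (n + 1)) K))) 1) hcol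
  rwa [hsat] at hmem

lemma minGens_last_zero {I : Ideal (MvPolynomial (Fin (n + 1)) K)} (hss : StronglyStable I)
    (hsat : idealSat I (irrelevant (n + 1) K) = I) {u : Fin (n + 1) →₀ ℕ}
    (hu : u ∈ minGens I) : u (Fin.last n) = 0 := by
  by_contra h
  have he : (u - Finsupp.single (Fin.last n) 1) + Finsupp.single (Fin.last n) 1 = u := by
    ext a
    simp only [Finsupp.tsub_apply, Finsupp.add_apply, Finsupp.single_apply]
    split_ifs with ha
    · subst ha; omega
    · omega
  have h2 : (monomial (u - Finsupp.single (Fin.last n) 1) 1 : MvPolynomial (Fin (n + 1)) K) ∈ I :=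
    sat_step hss hsat (by rw [he]; exact hu.1)
  refine hu.2 _ tsub_le_self ?_ h2
  intro hc
  have := congrArg (fun f => f (Fin.last n)) hc
  simp [Finsupp.tsub_apply] at this
  omega

end ExpansionAux2
section ExpansionAux3

open Finsupp

variable {K : Type} [Field K] {n : ℕ}

variable {I : Ideal (MvPolynomial (Fin (n + 1)) K)} {g : Fin (n + 1) →₀ ℕ}

/-- Abbreviation for the expansion generating set. -/
def expGens (I : Ideal (MvPolynomial (Fin (n + 1)) K)) (g : Fin (n + 1) →₀ ℕ) :
    Set (Fin (n + 1) →₀ ℕ) :=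
  (minGens I \ {g}) ∪
    {v | ∃ j : Fin (n + 1), (∀ i : Fin (n + 1), g i ≠ 0 → i ≤ j) ∧ (j : ℕ) < n ∧
      v = g + Finsupp.single j 1}

lemma not_dvd_expansion (hss : StronglyStable I)
    (hsat : idealSat I (irrelevant (n + 1) K) = I) (hg : g ∈ minGens I) (k : ℕ) :
    ¬ ∃ u ∈ expGens I g, u ≤ g + Finsupp.single (Fin.last n) k := by
  rintro ⟨u, hu, hle⟩
  rcases hu with ⟨humin, hune⟩ | ⟨j, hmax, hjn, rfl⟩
  · have h0 : u (Fin.last n) = 0 := minGens_last_zero hss hsat humin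
    have hug : u ≤ g := by
      intro a
      rcases eq_or_ne a (Fin.last n) with rfl | ha
      · simp [h0]
      · have := hle a
        simpa [Finsupp.add_apply, Finsupp.single_apply, ha.symm] using this
    exact hg.2 u hug (by simpa using hune) humin.1
  · have hj : j ≠ Fin.last n := by
      intro hc
      rw [hc] at hjn
      simp [Fin.val_last] at hjn
    have := hle j
    simp [Finsupp.add_apply, Finsupp.single_apply, hj.symm] at this

lemma eq_of_not_mem_expansion (hss : StronglyStable I)
    (hsat : idealSat I (irrelevant (n + 1) K) = I) (hg : g ∈ minGens I)
    {w : Fin (n + 1) →₀ ℕ} (hwI : (monomial w 1 : MvPolynomial (Fin (n + 1)) K) ∈ I)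
    (hnot : ¬ ∃ u ∈ expGens I g, u ≤ w) :
    g ≤ w ∧ w = g + Finsupp.single (Fin.last n) (w (Fin.last n) - g (Fin.last n)) := by
  obtain ⟨u, hu, huw⟩ := exists_minGens_le I w.degree w le_rfl hwI
  have hug : u = g := by
    by_contra hne
    exact hnot ⟨u, Or.inl ⟨hu, hne⟩, huw⟩
  subst hug
  refine ⟨huw, ?_⟩
  have hcoord : ∀ j : Fin (n + 1), (j : ℕ) < n → w j = u j := by
    intro j hjn
    by_contra hne
    have hlt : u j < w j := lt_of_le_of_ne (huw j) (Ne.symm hne)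
    by_cases hmax : ∀ i : Fin (n + 1), u i ≠ 0 → i ≤ j
    · refine hnot ⟨u + Finsupp.single j 1, Or.inr ⟨j, hmax, hjn, rfl⟩, ?_⟩
      intro a
      rcases eq_or_ne a j with rfl | ha
      · simpa [Finsupp.add_apply, Finsupp.single_apply] using hlt
      · simpa [Finsupp.add_apply, Finsupp.single_apply, ha.symm] using huw a
    · push_neg at hmax
      obtain ⟨t, hut, hjt⟩ := hmax
      have hI2 := hss u hu.1 j t hjt hut
      obtain ⟨u', hu', hle'⟩ := exists_minGens_le I _ _ le_rfl hI2
      have htj : j ≠ t := ne_of_lt hjt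
      have hne' : u' ≠ u := by
        intro hc
        have h3 := hle' t
        rw [hc] at h3
        simp only [Finsupp.tsub_apply, Finsupp.add_apply,
          Finsupp.single_eq_of_ne' htj, Finsupp.single_eq_same] at h3
        omega
      refine hnot ⟨u', Or.inl ⟨hu', hne'⟩, hle'.trans ?_⟩
      have h1 : u + Finsupp.single j 1 - Finsupp.single t 1 ≤ u + Finsupp.single j 1 :=
        tsub_le_self
      refine h1.trans ?_
      intro a
      rcases eq_or_ne a j with rfl | ha
      · simpa [Finsupp.add_apply, Finsupp.single_apply] using hlt
      · simpa [Finsupp.add_apply, Finsupp.single_apply, ha.symm] using huw a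
  ext a
  rcases eq_or_lt_of_le (Fin.le_last a) with rfl | hlt
  · have := huw (Fin.last n)
    simp only [Finsupp.add_apply, Finsupp.single_eq_same]
    omega
  · have ha : (a : ℕ) < n := by
      have := hlt
      simpa [Fin.lt_def, Fin.val_last] using this
    have han : a ≠ Fin.last n := by
      intro hc; rw [hc, Fin.val_last] at ha; omega
    simp only [Finsupp.add_apply, Finsupp.single_eq_of_ne' (Ne.symm han)]
    rw [hcoord a ha, add_zero]

end ExpansionAux3
set_option maxHeartbeats 1000000 in
/-- Expansion of a saturated strongly stable ideal at an expandable minimal generator `g`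
increases the Hilbert polynomial of the quotient by exactly `1`. -/
theorem expansion_hilbert_polynomial {K : Type} [Field K] (n : ℕ)
    (I : Ideal (MvPolynomial (Fin (n + 1)) K))
    (hmon : IsMonomialIdeal I) (hss : StronglyStable I)
    (hsat : idealSat I (irrelevant (n + 1) K) = I)
    (g : Fin (n + 1) →₀ ℕ) (hg : g ∈ minGens I)
    -- `g` is expandable: no monomial `x_i^{-1} x_{i+1} g` is a minimal generator
    (hexp : ∀ i : ℕ, ∀ h : i < n - 1, g ⟨i, by omega⟩ ≠ 0 →
      g - Finsupp.single (⟨i, by omega⟩ : Fin (n + 1)) 1 +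
        Finsupp.single (⟨i + 1, by omega⟩ : Fin (n + 1)) 1 ∉ minGens I)
    (I' : Ideal (MvPolynomial (Fin (n + 1)) K))
    -- `I'` is the expansion of `I` at `g`
    (hI' : I' = Ideal.span ((fun u => (monomial u 1 : MvPolynomial (Fin (n + 1)) K)) ''
      ((minGens I \ {g}) ∪
        {v | ∃ j : Fin (n + 1), (∀ i : Fin (n + 1), g i ≠ 0 → i ≤ j) ∧ (j : ℕ) < n ∧
          v = g + Finsupp.single j 1}))) :
    ∃ N : ℕ, ∀ i ≥ N, hfn I' i = hfn I i + 1 := by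
  classical
  have hA : ((minGens I \ {g}) ∪
      {v | ∃ j : Fin (n + 1), (∀ i : Fin (n + 1), g i ≠ 0 → i ≤ j) ∧ (j : ℕ) < n ∧
        v = g + Finsupp.single j 1}) = expGens I g := rfl
  rw [hA] at hI'
  have hmem' : ∀ w : Fin (n + 1) →₀ ℕ,
      (monomial w 1 : MvPolynomial (Fin (n + 1)) K) ∈ I' ↔ ∃ u ∈ expGens I g, u ≤ w := by
    intro w
    rw [hI', mem_ideal_span_monomial_image]
    constructor
    · intro h
      exact h w (by simp [support_monomial])
    · rintro ⟨u, hu, hle⟩ xi hxi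
      rw [support_monomial, if_neg (one_ne_zero)] at hxi
      rw [Finset.mem_singleton] at hxi
      subst hxi
      exact ⟨u, hu, hle⟩
  have hle : I' ≤ I := by
    rw [hI', Ideal.span_le]
    rintro x ⟨u, hu, rfl⟩
    rcases hu with ⟨hu1, -⟩ | ⟨j, -, -, rfl⟩
    · exact hu1.1
    · show (monomial (g + Finsupp.single j 1) 1 : MvPolynomial (Fin (n + 1)) K) ∈ I
      rw [show (monomial (g + Finsupp.single j 1) 1 : MvPolynomial (Fin (n + 1)) K)
          = monomial g 1 * monomial (Finsupp.single j 1) 1 by rw [monomial_mul, mul_one]]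
      exact Ideal.mul_mem_right _ I hg.1
  refine ⟨g.degree, fun i hi => ?_⟩
  haveI hfd : FiniteDimensional K (homogeneousSubmodule (Fin (n + 1)) K i) := by
    have hsub : homogeneousSubmodule (Fin (n + 1)) K i ≤
        restrictTotalDegree (Fin (n + 1)) K i := by
      intro p hp
      rw [mem_restrictTotalDegree]
      exact ((mem_homogeneousSubmodule _ _).mp hp).totalDegree_le
    exact Submodule.finiteDimensional_of_le hsub
  set w₀ : Fin (n + 1) →₀ ℕ := g + Finsupp.single (Fin.last n) (i - g.degree) with hw₀
  have hw₀deg : w₀.degree = i := by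
    rw [hw₀, degree_add', degree_single']; omega
  have hw₀I : (monomial w₀ 1 : MvPolynomial (Fin (n + 1)) K) ∈ I := by
    rw [show (monomial w₀ 1 : MvPolynomial (Fin (n + 1)) K)
        = monomial g 1 * monomial (Finsupp.single (Fin.last n) (i - g.degree)) 1 by
      rw [hw₀, monomial_mul, mul_one]]
    exact Ideal.mul_mem_right _ I hg.1
  have hw₀I' : (monomial w₀ 1 : MvPolynomial (Fin (n + 1)) K) ∉ I' := by
    rw [hmem']
    exact not_dvd_expansion hss hsat hg (i - g.degree)
  set HS := homogeneousSubmodule (Fin (n + 1)) K i with hHS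
  set ψ : HS →ₗ[K] (MvPolynomial (Fin (n + 1)) K ⧸ I') :=
    ((Ideal.Quotient.mkₐ K I').toLinearMap).comp HS.subtype with hψ
  have h0 : ∀ a ∈ I', (Ideal.Quotient.mkₐ K I) a = 0 := fun a ha =>
    Ideal.Quotient.eq_zero_iff_mem.mpr (hle ha)
  set φ : (MvPolynomial (Fin (n + 1)) K ⧸ I') →ₗ[K] (MvPolynomial (Fin (n + 1)) K ⧸ I) :=
    (Ideal.Quotient.liftₐ I' (Ideal.Quotient.mkₐ K I) h0).toLinearMap with hφ
  have hφmk : ∀ p : MvPolynomial (Fin (n + 1)) K,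
      φ ((Ideal.Quotient.mk I') p) = (Ideal.Quotient.mk I) p := by
    intro p
    simp [hφ, Ideal.Quotient.liftₐ_apply, Ideal.Quotient.mkₐ_eq_mk]
    rfl
  have hψr : LinearMap.range ψ = HS.map (Ideal.Quotient.mkₐ K I').toLinearMap := by
    rw [hψ, LinearMap.range_comp, Submodule.range_subtype]
  have h1 : hfn I' i = Module.finrank K (LinearMap.range ψ) := by
    unfold hfn
    rw [hψr, ← hHS]
  set f' : (LinearMap.range ψ) →ₗ[K] (MvPolynomial (Fin (n + 1)) K ⧸ I) :=
    φ.comp (LinearMap.range ψ).subtype with hf'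
  have hrn := LinearMap.finrank_range_add_finrank_ker f'
  have hcomp : φ.comp (Ideal.Quotient.mkₐ K I').toLinearMap
      = (Ideal.Quotient.mkₐ K I).toLinearMap := by
    apply LinearMap.ext
    intro p
    simpa [Ideal.Quotient.mkₐ_eq_mk] using hφmk p
  have hχ : LinearMap.range f' = HS.map (Ideal.Quotient.mkₐ K I).toLinearMap := by
    rw [hf', LinearMap.range_comp, Submodule.range_subtype, hψr, ← Submodule.map_comp, hcomp]
  have h2 : Module.finrank K (LinearMap.range f') = hfn I i := by
    unfold hfn
    rw [hχ, ← hHS]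
  set v₀ : MvPolynomial (Fin (n + 1)) K ⧸ I' := (Ideal.Quotient.mk I') (monomial w₀ 1) with hv₀
  have hv₀ne : v₀ ≠ 0 := fun hc => hw₀I' (Ideal.Quotient.eq_zero_iff_mem.mp hc)
  have hv₀ker : v₀ ∈ LinearMap.ker φ := by
    rw [LinearMap.mem_ker, hv₀, hφmk]
    exact Ideal.Quotient.eq_zero_iff_mem.mpr hw₀I
  have hw₀HS : (monomial w₀ 1 : MvPolynomial (Fin (n + 1)) K) ∈ HS := by
    rw [hHS]
    exact isHomogeneous_monomial 1 hw₀deg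
  have hv₀range : v₀ ∈ LinearMap.range ψ :=
    ⟨⟨monomial w₀ 1, hw₀HS⟩, by simp [hψ, hv₀, Ideal.Quotient.mkₐ_eq_mk]⟩
  have hspan : LinearMap.range ψ ⊓ LinearMap.ker φ = (K ∙ v₀) := by
    apply le_antisymm
    · rintro x ⟨⟨⟨f, hfHS⟩, rfl⟩, hx1⟩
      have hψf : ψ ⟨f, hfHS⟩ = (Ideal.Quotient.mk I') f := by
        simp [hψ, Ideal.Quotient.mkₐ_eq_mk]
      rw [hψf] at hx1 ⊢
      have hx2 : φ ((Ideal.Quotient.mk I') f) = 0 := hx1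
      rw [hφmk] at hx2
      have hfI : f ∈ I := Ideal.Quotient.eq_zero_iff_mem.mp hx2
      rw [show ((Ideal.Quotient.mk I') f : MvPolynomial (Fin (n + 1)) K ⧸ I')
          = ∑ u ∈ f.support, (Ideal.Quotient.mk I') (monomial u (coeff u f)) from by
        rw [← map_sum, MvPolynomial.support_sum_monomial_coeff]]
      apply Submodule.sum_mem
      intro u hu
      have huI : (monomial u 1 : MvPolynomial (Fin (n + 1)) K) ∈ I := hmon f hfI u hu
      have hfh : MvPolynomial.IsHomogeneous f i := by
        rw [hHS] at hfHS
        exact (mem_homogeneousSubmodule _ _).mp hfHS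
      have hdeg : u.degree = i := by
        have hw := hfh (MvPolynomial.mem_support_iff.mp hu)
        rw [Finsupp.degree_eq_weight_one]
        exact hw
      by_cases hcase : (monomial u 1 : MvPolynomial (Fin (n + 1)) K) ∈ I'
      · have hmem2 : (monomial u (coeff u f) : MvPolynomial (Fin (n + 1)) K) ∈ I' := by
          rw [← mul_one (coeff u f), ← C_mul_monomial]
          exact Ideal.mul_mem_left _ _ hcase
        rw [Ideal.Quotient.eq_zero_iff_mem.mpr hmem2]
        exact Submodule.zero_mem _
      · have hnot : ¬ ∃ u' ∈ expGens I g, u' ≤ u := fun hc => hcase ((hmem' u).mpr hc)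
        obtain ⟨hgu, hueq⟩ := eq_of_not_mem_expansion hss hsat hg huI hnot
        have hdd := hdeg
        rw [hueq, degree_add', degree_single'] at hdd
        have he2 : u (Fin.last n) - g (Fin.last n) = i - g.degree := by omega
        have hu0 : u = w₀ := by
          rw [hueq, he2, hw₀]
        rw [hu0, Submodule.mem_span_singleton]
        refine ⟨coeff w₀ f, ?_⟩
        have hsm : (coeff w₀ f) • v₀
            = (Ideal.Quotient.mk I') ((coeff w₀ f) • (monomial w₀ 1)) := by
          rw [hv₀, ← Ideal.Quotient.mkₐ_eq_mk K, ← map_smul]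
        rw [hsm, MvPolynomial.smul_monomial, smul_eq_mul, mul_one]
    · rw [Submodule.span_singleton_le_iff_mem]
      exact ⟨hv₀range, hv₀ker⟩
  have hkf : Module.finrank K (LinearMap.ker f') = 1 := by
    have e1 : Submodule.map (LinearMap.range ψ).subtype (LinearMap.ker f')
        = LinearMap.range ψ ⊓ LinearMap.ker φ := by
      rw [hf', LinearMap.ker_comp, Submodule.map_comap_subtype]
    rw [← Submodule.finrank_map_subtype_eq (LinearMap.range ψ) (LinearMap.ker f'), e1, hspan]
    exact finrank_span_singleton hv₀ne
  rw [h1, ← hrn, h2, hkf]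
end

section
/- Let I ⊂ S = K[x_0, ..., x_n] be a saturated Borel-fixed monomial ideal over an infinite field, and let Φ(I) = I · K[x_0, ..., x_n, x_{n+1}] be its extension (lift) to one more variable. Then Φ(I) is saturated with respect to the irrelevant ideal of K[x_0, ..., x_{n+1}], and Φ(I) is Borel-fixed. -/
open MvPolynomial

noncomputable def liftEquiv (K : Type) [Field K] (n : ℕ) :
    MvPolynomial (Fin (n + 2)) K ≃ₐ[K] Polynomial (MvPolynomial (Fin (n + 1)) K) :=
  (renameEquiv K finSuccEquivLast).trans (optionEquivLeft K (Fin (n + 1)))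

lemma liftEquiv_rename {K : Type} [Field K] {n : ℕ} (p : MvPolynomial (Fin (n + 1)) K) :
    liftEquiv K n (rename (Fin.castSucc : Fin (n + 1) → Fin (n + 2)) p) = Polynomial.C p := by
  have h : (liftEquiv K n).toAlgHom.comp
      (rename (Fin.castSucc : Fin (n + 1) → Fin (n + 2)) :
        MvPolynomial (Fin (n + 1)) K →ₐ[K] MvPolynomial (Fin (n + 2)) K) =
      Polynomial.CAlgHom := by
    apply algHom_ext
    intro j
    simp [liftEquiv, Polynomial.CAlgHom]
  exact DFunLike.congr_fun h p

lemma liftEquiv_Xlast {K : Type} [Field K] {n : ℕ} :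
    liftEquiv K n (X (Fin.last (n + 1))) = Polynomial.X := by
  simp [liftEquiv]

lemma mem_lift_of_mul_X_pow {K : Type} [Field K] {n : ℕ}
    (I : Ideal (MvPolynomial (Fin (n + 1)) K)) (f : MvPolynomial (Fin (n + 2)) K) (k : ℕ)
    (hf : f * X (Fin.last (n + 1)) ^ k ∈
      I.map (rename (Fin.castSucc : Fin (n + 1) → Fin (n + 2)) :
        MvPolynomial (Fin (n + 1)) K →ₐ[K] MvPolynomial (Fin (n + 2)) K).toRingHom) :
    f ∈ I.map (rename (Fin.castSucc : Fin (n + 1) → Fin (n + 2)) :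
        MvPolynomial (Fin (n + 1)) K →ₐ[K] MvPolynomial (Fin (n + 2)) K).toRingHom := by
  set er : MvPolynomial (Fin (n + 2)) K →+* Polynomial (MvPolynomial (Fin (n + 1)) K) :=
    (liftEquiv K n).toAlgHom.toRingHom with her
  set Φ : Ideal (MvPolynomial (Fin (n + 2)) K) :=
    I.map (rename (Fin.castSucc : Fin (n + 1) → Fin (n + 2)) :
        MvPolynomial (Fin (n + 1)) K →ₐ[K] MvPolynomial (Fin (n + 2)) K).toRingHom with hΦ
  have hmape : Φ.map er = I.map (Polynomial.C :
      MvPolynomial (Fin (n + 1)) K →+* Polynomial (MvPolynomial (Fin (n + 1)) K)) := by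
    rw [hΦ, Ideal.map_map]
    congr 1
    exact RingHom.ext fun p => liftEquiv_rename p
  have hmem : ∀ g : MvPolynomial (Fin (n + 2)) K, g ∈ Φ ↔ er g ∈ Φ.map er := by
    intro g
    constructor
    · exact fun h => Ideal.mem_map_of_mem _ h
    · intro h
      have hb : Function.Bijective er := (liftEquiv K n).bijective
      rw [← Ideal.comap_map_of_bijective er hb (I := Φ)]
      exact h
  rw [hmem, hmape, Ideal.mem_map_C_iff]
  intro d
  have h2 := (hmem _).mp hf
  rw [hmape, Ideal.mem_map_C_iff] at h2
  have h3 := h2 (d + k)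
  have hxl : er (X (Fin.last (n + 1))) = Polynomial.X := liftEquiv_Xlast
  rw [map_mul, map_pow, hxl, Polynomial.coeff_mul_X_pow] at h3
  exact h3

lemma borelAct_comp_rename {K : Type} [Field K] {n : ℕ}
    (γ : Matrix (Fin (n + 2)) (Fin (n + 2)) K) (hut : UpperTriangular γ) :
    (borelAct γ).comp (rename (Fin.castSucc : Fin (n + 1) → Fin (n + 2)) :
        MvPolynomial (Fin (n + 1)) K →ₐ[K] MvPolynomial (Fin (n + 2)) K).toRingHom =
      ((rename (Fin.castSucc : Fin (n + 1) → Fin (n + 2)) :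
        MvPolynomial (Fin (n + 1)) K →ₐ[K] MvPolynomial (Fin (n + 2)) K).toRingHom).comp
        (borelAct (γ.submatrix Fin.castSucc Fin.castSucc)) := by
  apply MvPolynomial.ringHom_ext
  · intro a
    simp [borelAct]
  · intro j
    simp only [borelAct, RingHom.coe_comp, Function.comp_apply, AlgHom.toRingHom_eq_coe,
      RingHom.coe_coe, rename_X, AlgHom.coe_toRingHom, aeval_X, map_sum, map_mul, rename_C]
    rw [Fin.sum_univ_castSucc]
    simp [hut (Fin.last (n + 1)) j.castSucc (Fin.castSucc_lt_last j), Matrix.submatrix_apply]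

lemma submatrix_ut_det {K : Type} [Field K] {n : ℕ}
    (γ : Matrix (Fin (n + 2)) (Fin (n + 2)) K) (hut : UpperTriangular γ)
    (hdet : IsUnit γ.det) :
    UpperTriangular (γ.submatrix Fin.castSucc Fin.castSucc) ∧
      IsUnit (γ.submatrix Fin.castSucc Fin.castSucc).det := by
  have hbt : γ.BlockTriangular id := fun i j h => hut i j h
  have hut' : UpperTriangular (γ.submatrix Fin.castSucc Fin.castSucc) := fun i j h =>
    hut _ _ (by simpa using h)
  have hbt' : (γ.submatrix Fin.castSucc Fin.castSucc).BlockTriangular id := fun i j h =>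
    hut' i j h
  refine ⟨hut', ?_⟩
  rw [Matrix.det_of_upperTriangular hbt']
  rw [Matrix.det_of_upperTriangular hbt] at hdet
  rw [isUnit_iff_ne_zero] at hdet ⊢
  intro h0
  apply hdet
  rw [Finset.prod_eq_zero_iff] at h0 ⊢
  obtain ⟨i, _, hi⟩ := h0
  exact ⟨i.castSucc, Finset.mem_univ _, hi⟩

/-- The lift `Φ(I) = I·K[x_0, …, x_{n+1}]` of a saturated Borel-fixed monomial ideal over an
infinite field is saturated and Borel-fixed. -/
theorem lift_saturated_borelFixed {K : Type} [Field K] [Infinite K] (n : ℕ)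
    (I : Ideal (MvPolynomial (Fin (n + 1)) K))
    (hmon : IsMonomialIdeal I) (hbf : BorelFixed I)
    (hsat : idealSat I (irrelevant (n + 1) K) = I)
    (Φ : Ideal (MvPolynomial (Fin (n + 2)) K))
    (hΦ : Φ = I.map (rename (Fin.castSucc : Fin (n + 1) → Fin (n + 2)) :
      MvPolynomial (Fin (n + 1)) K →ₐ[K] MvPolynomial (Fin (n + 2)) K).toRingHom) :
    idealSat Φ (irrelevant (n + 2) K) = Φ ∧ BorelFixed Φ := by
  subst hΦ
  constructor
  · apply le_antisymm
    · apply iSup_le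
      intro k f hf
      apply mem_lift_of_mul_X_pow I f k
      have hX1 : (X (Fin.last (n + 1)) : MvPolynomial (Fin (n + 2)) K) ∈
          irrelevant (n + 2) K := by
        apply Ideal.subset_span
        exact Set.mem_range_self _
      have hX : (X (Fin.last (n + 1)) : MvPolynomial (Fin (n + 2)) K) ^ k ∈
          irrelevant (n + 2) K ^ k := Ideal.pow_mem_pow hX1 k
      have h := Submodule.mem_colon.mp hf _ hX
      simpa [smul_eq_mul] using h
    · apply le_iSup_of_le 0
      intro f hf
      rw [Submodule.mem_colon]
      intro p hp
      simpa [smul_eq_mul] using Ideal.mul_mem_right p _ hf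
  · intro γ hut hdet
    obtain ⟨hut', hdet'⟩ := submatrix_ut_det γ hut hdet
    rw [Ideal.map_map, borelAct_comp_rename γ hut, ← Ideal.map_map, hbf _ hut' hdet']
end
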